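/- Let α, β, γ, δ be Lipschitz integers and let ε be the vector product of βα, γα, and δ, i.e. a Lipschitz integer such that for every x : Quaternion ℤ, (ε * star x).re equals the determinant of the 4×4 integer matrix whose rows are the coordinate vectors ![re, imI, imJ, imK] of β * α, γ * α, δ, x, in this order. Then ε is a left multiple of α: there exists a Lipschitz integer μ with ε = μ * α. -/

import Mathlib

/-- The coordinate vector of a Lipschitz integer. -/
def coords (q : Quaternion ℤ) : Fin 4 → ℤ := ![q.re, q.imI, q.imJ, q.imK]

def muQ (α β γ δ : Quaternion ℤ) : Quaternion ℤ :=
  ⟨(-α.re*β.imI*γ.imJ*δ.imK + α.re*β.imI*γ.imK*δ.imJ + α.re*β.imJ*γ.imI*δ.imK - α.re*β.imJ*γ.imK*δ.imI - α.re*β.imK*γ.imI*δ.imJ + α.re*β.imK*γ.imJ*δ.imI - α.imI*β.imI*γ.imJ*δ.imJ - α.imI*β.imI*γ.imK*δ.imK + α.imI*β.imJ*γ.imI*δ.imJ + α.imI*β.imJ*γ.imK*δ.re + α.imI*β.imK*γ.imI*δ.imK - α.imI*β.imK*γ.imJ*δ.re + α.imJ*β.imI*γ.imJ*δ.imI - α.imJ*β.imI*γ.imK*δ.re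 - α.imJ*β.imJ*γ.imI*δ.imI - α.imJ*β.imJ*γ.imK*δ.imK + α.imJ*β.imK*γ.imI*δ.re + α.imJ*β.imK*γ.imJ*δ.imK + α.imK*β.imI*γ.imJ*δ.re + α.imK*β.imI*γ.imK*δ.imI - α.imK*β.imJ*γ.imI*δ.re + α.imK*β.imJ*γ.imK*δ.imJ - α.imK*β.imK*γ.imI*δ.imI - α.imK*β.imK*γ.imJ*δ.imJ),
   (α.re*β.re*γ.imJ*δ.imK - α.re*β.re*γ.imK*δ.imJ - α.re*β.imJ*γ.re*δ.imK + α.re*β.imJ*γ.imK*δ.re + α.re*β.imK*γ.re*δ.imJ - α.re*β.imK*γ.imJ*δ.re + α.imI*β.re*γ.imJ*δ.imJ + α.imI*β.re*γ.imK*δ.imK - α.imI*β.imJ*γ.re*δ.imJ + α.imI*β.imJ*γ.imK*δ.imI - α.imI*β.imK*γ.re*δ.imK - α.imI*β.imK*γ.imJ*δ.imI - α.imJ*β.re*γ.imJ*δ.imI + α.imJ*β.re*γ.imK*δ.re + α.imJ*β.imJ*γ.re*δ.imI + α.imJ*β.imJ*γ.imK*δ.imJ - α.imJ*β.imK*γ.re*δ.re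 - α.imJ*β.imK*γ.imJ*δ.imJ - α.imK*β.re*γ.imJ*δ.re - α.imK*β.re*γ.imK*δ.imI + α.imK*β.imJ*γ.re*δ.re + α.imK*β.imJ*γ.imK*δ.imK + α.imK*β.imK*γ.re*δ.imI - α.imK*β.imK*γ.imJ*δ.imK),
   (-α.re*β.re*γ.imI*δ.imK + α.re*β.re*γ.imK*δ.imI + α.re*β.imI*γ.re*δ.imK - α.re*β.imI*γ.imK*δ.re - α.re*β.imK*γ.re*δ.imI + α.re*β.imK*γ.imI*δ.re - α.imI*β.re*γ.imI*δ.imJ - α.imI*β.re*γ.imK*δ.re + α.imI*β.imI*γ.re*δ.imJ - α.imI*β.imI*γ.imK*δ.imI + α.imI*β.imK*γ.re*δ.re + α.imI*β.imK*γ.imI*δ.imI + α.imJ*β.re*γ.imI*δ.imI + α.imJ*β.re*γ.imK*δ.imK - α.imJ*β.imI*γ.re*δ.imI - α.imJ*β.imI*γ.imK*δ.imJ - α.imJ*β.imK*γ.re*δ.imK + α.imJ*β.imK*γ.imI*δ.imJ + α.imK*β.re*γ.imI*δ.re - α.imK*β.re*γ.imK*δ.imJ - α.imK*β.imI*γ.re*δ.re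 - α.imK*β.imI*γ.imK*δ.imK + α.imK*β.imK*γ.re*δ.imJ + α.imK*β.imK*γ.imI*δ.imK),
   (α.re*β.re*γ.imI*δ.imJ - α.re*β.re*γ.imJ*δ.imI - α.re*β.imI*γ.re*δ.imJ + α.re*β.imI*γ.imJ*δ.re + α.re*β.imJ*γ.re*δ.imI - α.re*β.imJ*γ.imI*δ.re - α.imI*β.re*γ.imI*δ.imK + α.imI*β.re*γ.imJ*δ.re + α.imI*β.imI*γ.re*δ.imK + α.imI*β.imI*γ.imJ*δ.imI - α.imI*β.imJ*γ.re*δ.re - α.imI*β.imJ*γ.imI*δ.imI - α.imJ*β.re*γ.imI*δ.re - α.imJ*β.re*γ.imJ*δ.imK + α.imJ*β.imI*γ.re*δ.re + α.imJ*β.imI*γ.imJ*δ.imJ + α.imJ*β.imJ*γ.re*δ.imK - α.imJ*β.imJ*γ.imI*δ.imJ + α.imK*β.re*γ.imI*δ.imI + α.imK*β.re*γ.imJ*δ.imJ - α.imK*β.imI*γ.re*δ.imI + α.imK*β.imI*γ.imJ*δ.imK - α.imK*β.imJ*γ.re*δ.imJ - α.imK*β.imJ*γ.imI*δ.imK)⟩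

theorem det_fin_four' (M : Matrix (Fin 4) (Fin 4) ℤ) :
    M.det =
      M 0 0 * M 1 1 * M 2 2 * M 3 3 - M 0 0 * M 1 1 * M 2 3 * M 3 2 -
        M 0 0 * M 1 2 * M 2 1 * M 3 3 + M 0 0 * M 1 2 * M 2 3 * M 3 1 +
        M 0 0 * M 1 3 * M 2 1 * M 3 2 - M 0 0 * M 1 3 * M 2 2 * M 3 1 -
        M 0 1 * M 1 0 * M 2 2 * M 3 3 + M 0 1 * M 1 0 * M 2 3 * M 3 2 +
        M 0 1 * M 1 2 * M 2 0 * M 3 3 - M 0 1 * M 1 2 * M 2 3 * M 3 0 -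
        M 0 1 * M 1 3 * M 2 0 * M 3 2 + M 0 1 * M 1 3 * M 2 2 * M 3 0 +
        M 0 2 * M 1 0 * M 2 1 * M 3 3 - M 0 2 * M 1 0 * M 2 3 * M 3 1 -
        M 0 2 * M 1 1 * M 2 0 * M 3 3 + M 0 2 * M 1 1 * M 2 3 * M 3 0 +
        M 0 2 * M 1 3 * M 2 0 * M 3 1 - M 0 2 * M 1 3 * M 2 1 * M 3 0 -
        M 0 3 * M 1 0 * M 2 1 * M 3 2 + M 0 3 * M 1 0 * M 2 2 * M 3 1 +
        M 0 3 * M 1 1 * M 2 0 * M 3 2 - M 0 3 * M 1 1 * M 2 2 * M 3 0 -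
        M 0 3 * M 1 2 * M 2 0 * M 3 1 + M 0 3 * M 1 2 * M 2 1 * M 3 0 := by
  simp [Matrix.det_succ_row_zero, Fin.sum_univ_succ, Fin.succ_ne_zero, Matrix.submatrix,
    show ((2 : Fin 3).succ : Fin 4) = 3 from rfl,
    show (Fin.succAbove (2 : Fin 4) 2 : Fin 4) = 3 from rfl,
    show (Fin.succAbove (1 : Fin 4) 2 : Fin 4) = 3 from rfl,
    show (Fin.castSucc (2 : Fin 3) : Fin 4) = 2 from rfl,
    show (Fin.succAbove (3 : Fin 4) 2 : Fin 4) = 2 from rfl]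
  ring

set_option maxHeartbeats 1600000 in
theorem key_aux (α β γ δ x : Quaternion ℤ) :
    ((muQ α β γ δ) * α * star x).re
      = (Matrix.of ![coords (β * α), coords (γ * α), coords δ, coords x]).det := by
  rw [det_fin_four']
  simp only [Matrix.of_apply, Matrix.cons_val', Matrix.cons_val_zero,
    Matrix.cons_val_one, Matrix.head_cons, Matrix.empty_val', Matrix.cons_val_fin_one,
    Matrix.head_fin_const, Matrix.cons_val_two, Matrix.tail_cons, Matrix.cons_val_three,
    coords, Quaternion.re_mul, Quaternion.imI_mul, Quaternion.imJ_mul, Quaternion.imK_mul,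
    Quaternion.re_star, Quaternion.imI_star, Quaternion.imJ_star, Quaternion.imK_star]
  simp only [muQ]
  ring

theorem vectorProduct_right_multiples_is_left_multiple (α β γ δ ε : Quaternion ℤ)
    (hε : ∀ x : Quaternion ℤ,
      (ε * star x).re = (Matrix.of ![coords (β * α), coords (γ * α), coords δ, coords x]).det) :
    ∃ μ : Quaternion ℤ, ε = μ * α := by
  refine ⟨muQ α β γ δ, ?_⟩
  have h0 : ∀ x : Quaternion ℤ, ((ε - muQ α β γ δ * α) * star x).re = 0 := by
    intro x
    rw [sub_mul, Quaternion.re_sub, hε x, key_aux α β γ δ x, sub_self]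
  have h1 := h0 (ε - muQ α β γ δ * α)
  rw [← Quaternion.normSq_def, Quaternion.normSq_eq_zero, sub_eq_zero] at h1
  exact h1
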